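/- Let R = ℂ⟦X,Y⟧ be the formal power series ring in two variables over ℂ. For every integer k ≥ 1, there do not exist l, n ∈ R, both with zero constant coefficient, such that l·n = X² + Y^{2k+1}. Likewise, there do not exist such l, n with l·n = X³ + Y⁴, nor with l·n = X³ + Y⁵. -/

import Mathlib

open MvPowerSeries Finsupp

private lemma key (p q : ℕ) (hp : 2 ≤ p) (hq : 2 ≤ q) (hpq : Nat.Coprime p q) :
    ¬ ∃ l n : MvPowerSeries (Fin 2) ℂ,
        constantCoeff l = 0 ∧ constantCoeff n = 0 ∧
        l * n = (X 0 : MvPowerSeries (Fin 2) ℂ) ^ p + (X 1) ^ q := by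
  classical
  rintro ⟨l, n, hl0, hn0, hln⟩
  set w : Fin 2 → ℕ := ![q, p] with hw
  have wsingle : ∀ (i : Fin 2) (m : ℕ), weight w (single i m) = m * w i := by
    intro i m
    rw [weight_apply, Finsupp.sum_single_index]
    · simp [smul_eq_mul]
    · simp
  have hdecomp : ∀ d : Fin 2 →₀ ℕ, d = single 0 (d 0) + single 1 (d 1) := by
    intro d; ext s; fin_cases s <;> simp
  have wform : ∀ d : Fin 2 →₀ ℕ, weight w d = d 0 * q + d 1 * p := by
    intro d
    conv_lhs => rw [hdecomp d]
    rw [map_add, wsingle, wsingle]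
    simp [hw]
  have wzero : ∀ d : Fin 2 →₀ ℕ, weight w d = 0 → d = 0 := by
    intro d hd
    rw [wform] at hd
    have h0 : d 0 = 0 := by
      by_contra h
      have : q ≤ d 0 * q := Nat.le_mul_of_pos_left q (by omega)
      omega
    have h1 : d 1 = 0 := by
      by_contra h
      have : p ≤ d 1 * p := Nat.le_mul_of_pos_left p (by omega)
      omega
    ext s; fin_cases s
    · exact h0
    · exact h1
  have hne : (single (0 : Fin 2) p : Fin 2 →₀ ℕ) ≠ single 1 q := by
    intro h
    have := DFunLike.congr_fun h 0
    simp [Finsupp.single_apply] at this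
    omega
  set f : MvPowerSeries (Fin 2) ℂ := (X 0 : MvPowerSeries (Fin 2) ℂ) ^ p + (X 1) ^ q with hf
  have hcoefff : ∀ d, coeff d f =
      (if d = single 0 p then 1 else 0) + (if d = single 1 q then 1 else 0) := by
    intro d
    rw [hf, map_add, coeff_X_pow, coeff_X_pow]
  have hcoeffp : coeff (single (0 : Fin 2) p) f = 1 := by
    rw [hcoefff]; rw [if_pos rfl, if_neg hne]; ring
  have hcoeffq : coeff (single (1 : Fin 2) q) f = 1 := by
    rw [hcoefff]; rw [if_neg (Ne.symm hne), if_pos rfl]; ring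
  have hfne : f ≠ 0 := fun h => by simp [h] at hcoeffp
  have hlne : l ≠ 0 := fun h => hfne (by rw [← hln, h, zero_mul])
  have hnne : n ≠ 0 := fun h => hfne (by rw [← hln, h, mul_zero])
  have hSl : {m : ℕ | ∃ d, weight w d = m ∧ coeff d l ≠ 0}.Nonempty := by
    obtain ⟨d, hd⟩ : ∃ d, coeff d l ≠ 0 := by
      by_contra h; push_neg at h; exact hlne (MvPowerSeries.ext h)
    exact ⟨weight w d, d, rfl, hd⟩
  have hSn : {m : ℕ | ∃ d, weight w d = m ∧ coeff d n ≠ 0}.Nonempty := by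
    obtain ⟨d, hd⟩ : ∃ d, coeff d n ≠ 0 := by
      by_contra h; push_neg at h; exact hnne (MvPowerSeries.ext h)
    exact ⟨weight w d, d, rfl, hd⟩
  set a := sInf {m : ℕ | ∃ d, weight w d = m ∧ coeff d l ≠ 0} with ha
  set b := sInf {m : ℕ | ∃ d, weight w d = m ∧ coeff d n ≠ 0} with hb
  obtain ⟨dl, hdlw, hdl⟩ := Nat.sInf_mem hSl
  obtain ⟨dn, hdnw, hdn⟩ := Nat.sInf_mem hSn
  rw [← ha] at hdlw
  rw [← hb] at hdnw
  have hllt : ∀ d : Fin 2 →₀ ℕ, weight w d < a → coeff d l = 0 := by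
    intro d hd
    by_contra h
    have hmem : weight w d ∈ {m : ℕ | ∃ d, weight w d = m ∧ coeff d l ≠ 0} := ⟨d, rfl, h⟩
    have := Nat.sInf_le hmem
    rw [← ha] at this
    omega
  have hnlt : ∀ d : Fin 2 →₀ ℕ, weight w d < b → coeff d n = 0 := by
    intro d hd
    by_contra h
    have hmem : weight w d ∈ {m : ℕ | ∃ d, weight w d = m ∧ coeff d n ≠ 0} := ⟨d, rfl, h⟩
    have := Nat.sInf_le hmem
    rw [← hb] at this
    omega
  have hapos : a ≠ 0 := by
    intro h
    rw [h] at hdlw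
    rw [wzero dl hdlw, coeff_zero_eq_constantCoeff_apply, hl0] at hdl
    exact hdl rfl
  have hbpos : b ≠ 0 := by
    intro h
    rw [h] at hdnw
    rw [wzero dn hdnw, coeff_zero_eq_constantCoeff_apply, hn0] at hdn
    exact hdn rfl
  set L : MvPowerSeries (Fin 2) ℂ := fun d => if weight w d = a then coeff d l else 0 with hL
  set N : MvPowerSeries (Fin 2) ℂ := fun d => if weight w d = b then coeff d n else 0 with hN
  have hLc : ∀ d, coeff d L = if weight w d = a then coeff d l else 0 := fun d => rfl
  have hNc : ∀ d, coeff d N = if weight w d = b then coeff d n else 0 := fun d => rfl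
  have hLne : L ≠ 0 := by
    intro h
    have := hLc dl
    rw [h, if_pos hdlw, map_zero] at this
    exact hdl this.symm
  have hNne : N ≠ 0 := by
    intro h
    have := hNc dn
    rw [h, if_pos hdnw, map_zero] at this
    exact hdn this.symm
  obtain ⟨e, he⟩ : ∃ e, coeff e (L * N) ≠ 0 := by
    by_contra h; push_neg at h
    exact mul_ne_zero hLne hNne (MvPowerSeries.ext h)
  have he' : ∑ x ∈ Finset.HasAntidiagonal.antidiagonal e, coeff x.1 L * coeff x.2 N ≠ 0 := by
    rw [← coeff_mul]; exact he
  obtain ⟨uv, huv, huvne⟩ := Finset.exists_ne_zero_of_sum_ne_zero he'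
  rw [Finset.HasAntidiagonal.mem_antidiagonal] at huv
  have hwu : weight w uv.1 = a := by
    by_contra h
    rw [hLc, if_neg h, zero_mul] at huvne
    exact huvne rfl
  have hwv : weight w uv.2 = b := by
    by_contra h
    rw [hNc, if_neg h, mul_zero] at huvne
    exact huvne rfl
  have hwe : weight w e = a + b := by rw [← huv, map_add, hwu, hwv]
  have hcoe : coeff e (l * n) = coeff e (L * N) := by
    rw [coeff_mul, coeff_mul]
    apply Finset.sum_congr rfl
    intro x hx
    rw [Finset.HasAntidiagonal.mem_antidiagonal] at hx
    have hsum : weight w x.1 + weight w x.2 = a + b := by rw [← map_add, hx, hwe]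
    rw [hLc, hNc]
    rcases lt_trichotomy (weight w x.1) a with h | h | h
    · have h1 := hllt _ h
      have h2 : ¬ weight w x.1 = a := by omega
      simp [h1, h2]
    · have h2 : weight w x.2 = b := by omega
      rw [if_pos h, if_pos h2]
    · have h1 := hnlt x.2 (by omega)
      have h2 : ¬ weight w x.1 = a := by omega
      simp [h1, h2]
  have hfe : coeff e f ≠ 0 := by rw [← hln, hcoe]; exact he
  have hab : a + b = p * q := by
    rw [hcoefff] at hfe
    rcases eq_or_ne e (single 0 p) with h | h
    · rw [← hwe, h, wsingle]; simp [hw]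
    · rcases eq_or_ne e (single 1 q) with h' | h'
      · rw [← hwe, h', wsingle]; simp [hw, mul_comm]
      · rw [if_neg h, if_neg h'] at hfe; simp at hfe
  have hdvd : ∀ (i : Fin 2) (m : ℕ), weight w (single i m) = a + b →
      coeff (single i m) f ≠ 0 → w i ∣ a := by
    intro i m hm hc
    rw [← hln, coeff_mul] at hc
    obtain ⟨x, hx, hxne⟩ := Finset.exists_ne_zero_of_sum_ne_zero hc
    rw [Finset.HasAntidiagonal.mem_antidiagonal] at hx
    have hx1 : coeff x.1 l ≠ 0 := fun h => hxne (by rw [h, zero_mul])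
    have hx2 : coeff x.2 n ≠ 0 := fun h => hxne (by rw [h, mul_zero])
    have h1 : a ≤ weight w x.1 := by
      by_contra h; exact hx1 (hllt _ (by omega))
    have h2 : b ≤ weight w x.2 := by
      by_contra h; exact hx2 (hnlt _ (by omega))
    have hsum : weight w x.1 + weight w x.2 = a + b := by rw [← map_add, hx, hm]
    have hwx1 : weight w x.1 = a := by omega
    have hxi : ∀ j : Fin 2, j ≠ i → x.1 j = 0 := by
      intro j hj
      have := DFunLike.congr_fun hx j
      simp [Finsupp.single_apply, hj.symm] at this
      omega
    have hx1s : x.1 = single i (x.1 i) := by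
      ext s
      rcases eq_or_ne s i with rfl | hs
      · simp
      · rw [hxi s hs, Finsupp.single_apply, if_neg (Ne.symm hs)]
    rw [hx1s, wsingle] at hwx1
    exact Dvd.intro_left (x.1 i) hwx1
  have hqa : q ∣ a := by
    have := hdvd 0 p (by rw [wsingle, hab]; simp [hw]) (by rw [hcoeffp]; exact one_ne_zero)
    simpa [hw] using this
  have hpa : p ∣ a := by
    have := hdvd 1 q (by rw [wsingle, hab]; simp [hw, mul_comm]) (by rw [hcoeffq]; exact one_ne_zero)
    simpa [hw] using this
  have hpqa : p * q ∣ a := Nat.Coprime.mul_dvd_of_dvd_of_dvd hpq hpa hqa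
  have := Nat.le_of_dvd (Nat.pos_of_ne_zero hapos) hpqa
  omega

theorem stmt10 :
    (∀ k : ℕ, 1 ≤ k →
      ¬ ∃ l n : MvPowerSeries (Fin 2) ℂ,
          constantCoeff l = 0 ∧ constantCoeff n = 0 ∧
          l * n = (X 0) ^ 2 + (X 1) ^ (2 * k + 1)) ∧
    (¬ ∃ l n : MvPowerSeries (Fin 2) ℂ,
        constantCoeff l = 0 ∧ constantCoeff n = 0 ∧
        l * n = (X 0) ^ 3 + (X 1) ^ 4) ∧
    (¬ ∃ l n : MvPowerSeries (Fin 2) ℂ,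
        constantCoeff l = 0 ∧ constantCoeff n = 0 ∧
        l * n = (X 0) ^ 3 + (X 1) ^ 5) := by
  refine ⟨fun k hk => key 2 (2 * k + 1) le_rfl (by omega) ?_,
    key 3 4 (by norm_num) (by norm_num) (by decide),
    key 3 5 (by norm_num) (by norm_num) (by decide)⟩
  simp [Nat.coprime_comm, Nat.coprime_two_right]
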